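/- Let V, W be finite-dimensional complex Hermitian vector spaces and (B₁, B₂, i, j) a stable solution of the real ADHM equations [B₁,B₂] + ij = 0 and [B₁,B₁†] + [B₂,B₂†] + ii† − j†j = 0. Define the complex ADHM datum B⃗ = (B₁₁, B₁₂, B₂₁, B₂₂, i₁, i₂, j₁, j₂) = (B₁, B₂, −B₂†, B₁†, i, −j†, j, i†). Then B⃗ satisfies the complex ADHM equations: [B₁₁,B₁₂] + i₁j₁ = 0, [B₂₁,B₂₂] + i₂j₂ = 0, and [B₁₁,B₂₂] + [B₂₁,B₁₂] + i₁j₂ + i₂j₁ = 0. -/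
import Mathlib


variable {V W : Type*} [NormedAddCommGroup V] [InnerProductSpace ℂ V]
  [NormedAddCommGroup W] [InnerProductSpace ℂ W]
  [FiniteDimensional ℂ V] [FiniteDimensional ℂ W]

def ADHMStable (B₁ B₂ : V →ₗ[ℂ] V) (i : W →ₗ[ℂ] V) : Prop :=
  ∀ S : Submodule ℂ V, S ≠ ⊤ → (∀ v ∈ S, B₁ v ∈ S) → (∀ v ∈ S, B₂ v ∈ S) →
    ¬ LinearMap.range i ≤ S

/-- A stable solution of the real ADHM equations yields, via the assignment
`(B₁₁,B₁₂,B₂₁,B₂₂,i₁,i₂,j₁,j₂) = (B₁,B₂,−B₂†,B₁†,i,−j†,j,i†)`, a solution of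
the three complex ADHM equations. -/
theorem real_solution_satisfies_complex_adhm
    (B₁ B₂ : V →ₗ[ℂ] V) (i : W →ₗ[ℂ] V) (j : V →ₗ[ℂ] W)
    (hstab : ADHMStable B₁ B₂ i)
    (h1 : B₁ ∘ₗ B₂ - B₂ ∘ₗ B₁ + i ∘ₗ j = 0)
    (h2 : B₁ ∘ₗ LinearMap.adjoint B₁ - LinearMap.adjoint B₁ ∘ₗ B₁ +
          (B₂ ∘ₗ LinearMap.adjoint B₂ - LinearMap.adjoint B₂ ∘ₗ B₂) +
          i ∘ₗ LinearMap.adjoint i - LinearMap.adjoint j ∘ₗ j = 0) :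
    (B₁ ∘ₗ B₂ - B₂ ∘ₗ B₁ + i ∘ₗ j = 0) ∧
    ((-LinearMap.adjoint B₂) ∘ₗ LinearMap.adjoint B₁ -
      LinearMap.adjoint B₁ ∘ₗ (-LinearMap.adjoint B₂) +
      (-LinearMap.adjoint j) ∘ₗ LinearMap.adjoint i = 0) ∧
    (B₁ ∘ₗ LinearMap.adjoint B₁ - LinearMap.adjoint B₁ ∘ₗ B₁ +
      ((-LinearMap.adjoint B₂) ∘ₗ B₂ - B₂ ∘ₗ (-LinearMap.adjoint B₂)) +
      i ∘ₗ LinearMap.adjoint i + (-LinearMap.adjoint j) ∘ₗ j = 0) := by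
  refine ⟨h1, ?_, ?_⟩
  · rw [show (-LinearMap.adjoint B₂) ∘ₗ LinearMap.adjoint B₁ -
      LinearMap.adjoint B₁ ∘ₗ (-LinearMap.adjoint B₂) +
      (-LinearMap.adjoint j) ∘ₗ LinearMap.adjoint i
      = -(LinearMap.adjoint (B₁ ∘ₗ B₂ - B₂ ∘ₗ B₁ + i ∘ₗ j)) by
        simp only [map_add, map_sub, LinearMap.adjoint_comp, LinearMap.neg_comp,
          LinearMap.comp_neg]; abel]
    rw [h1]; simp
  · rw [show B₁ ∘ₗ LinearMap.adjoint B₁ - LinearMap.adjoint B₁ ∘ₗ B₁ +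
      ((-LinearMap.adjoint B₂) ∘ₗ B₂ - B₂ ∘ₗ (-LinearMap.adjoint B₂)) +
      i ∘ₗ LinearMap.adjoint i + (-LinearMap.adjoint j) ∘ₗ j
      = B₁ ∘ₗ LinearMap.adjoint B₁ - LinearMap.adjoint B₁ ∘ₗ B₁ +
          (B₂ ∘ₗ LinearMap.adjoint B₂ - LinearMap.adjoint B₂ ∘ₗ B₂) +
          i ∘ₗ LinearMap.adjoint i - LinearMap.adjoint j ∘ₗ j by
        simp only [LinearMap.neg_comp, LinearMap.comp_neg]; abel]
    exact h2
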